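/- There exists a real number s with 0.327 < s < 0.328 such that (s, s) is a positive solution of the equilateral pentagonal Siamese system; and there exists a positive solution (x, x̃) of the equilateral pentagonal Siamese system with 0.0711 < x < 0.0712 and 0.4923 < x̃ < 0.4924, in which case (x̃, x) is also a positive solution. -/

import Mathlib

/-- `(x, x̃) = p` is a positive solution of the equilateral pentagonal Siamese
system. -/
def EqPentSol (p : ℝ × ℝ) : Prop :=
  0 < p.1 ∧ p.1 < Real.sqrt 3 / 2 ∧ 0 < p.2 ∧ p.2 < Real.sqrt 3 / 2 ∧
  p.2 = (5 * p.1 ^ 4 - 5 * p.1 ^ 2 + 1) / (2 * (1 - p.1 ^ 2) ^ 2) ∧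
  p.1 = (5 * p.2 ^ 4 - 5 * p.2 ^ 2 + 1) / (2 * (1 - p.2 ^ 2) ^ 2)

lemma sqrt3_half_gt : (0.866 : ℝ) < Real.sqrt 3 / 2 := by
  have : (1.732 : ℝ) < Real.sqrt 3 := by
    rw [show (1.732:ℝ) = Real.sqrt (1.732^2) by
      rw [Real.sqrt_sq]; norm_num]
    exact Real.sqrt_lt_sqrt (by positivity) (by norm_num)
  linarith

lemma fixed_point : ∃ s : ℝ, 0.327 < s ∧ s < 0.328 ∧ EqPentSol (s, s) := by
  set f : ℝ → ℝ := fun x => 5 * x ^ 4 - 5 * x ^ 2 + 1 - 2 * x * (1 - x ^ 2) ^ 2 with hf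
  have hc : ContinuousOn f (Set.Icc (0.327:ℝ) 0.328) := by fun_prop
  have h0 : (0:ℝ) ∈ Set.Ioo (f 0.328) (f 0.327) := by
    constructor <;> (simp only [hf]; norm_num)
  obtain ⟨s, hs, hfs⟩ := intermediate_value_Ioo' (by norm_num : (0.327:ℝ) ≤ 0.328) hc h0
  obtain ⟨hs1, hs2⟩ := hs
  refine ⟨s, hs1, hs2, ?_, ?_, ?_, ?_, ?_, ?_⟩
  · show (0:ℝ) < s; linarith
  · show s < Real.sqrt 3 / 2; linarith [sqrt3_half_gt]
  · show (0:ℝ) < s; linarith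
  · show s < Real.sqrt 3 / 2; linarith [sqrt3_half_gt]
  all_goals {
    show s = _
    have hd : (2:ℝ) * (1 - s ^ 2) ^ 2 ≠ 0 := by nlinarith
    rw [eq_div_iff hd]
    have : f s = 0 := hfs
    simp only [hf] at this
    linear_combination -this }

set_option maxHeartbeats 1000000 in
lemma two_cycle : ∃ x xt : ℝ, EqPentSol (x, xt) ∧
    0.0711 < x ∧ x < 0.0712 ∧ 0.4923 < xt ∧ xt < 0.4924 ∧
    EqPentSol (xt, x) := by
  set F : ℝ → ℝ := fun x =>
    5 * (5 * x ^ 4 - 5 * x ^ 2 + 1) ^ 4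
      - 5 * (5 * x ^ 4 - 5 * x ^ 2 + 1) ^ 2 * (2 * (1 - x ^ 2) ^ 2) ^ 2
      + (2 * (1 - x ^ 2) ^ 2) ^ 4
      - 2 * x * ((2 * (1 - x ^ 2) ^ 2) ^ 2 - (5 * x ^ 4 - 5 * x ^ 2 + 1) ^ 2) ^ 2
    with hF
  have hc : ContinuousOn F (Set.Icc (0.0711:ℝ) 0.0712) := by fun_prop
  have h0 : (0:ℝ) ∈ Set.Ioo (F 0.0712) (F 0.0711) := by
    constructor <;> (simp only [hF]; norm_num)
  obtain ⟨x, hx, hFx⟩ := intermediate_value_Ioo' (by norm_num : (0.0711:ℝ) ≤ 0.0712) hc h0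
  obtain ⟨hx1, hx2⟩ := hx
  have hFx0 : F x = 0 := hFx
  simp only [hF] at hFx0
  set xt : ℝ := (5 * x ^ 4 - 5 * x ^ 2 + 1) / (2 * (1 - x ^ 2) ^ 2) with hxt
  have hd : (0:ℝ) < 2 * (1 - x ^ 2) ^ 2 := by nlinarith
  have hd' : (2:ℝ) * (1 - x ^ 2) ^ 2 ≠ 0 := ne_of_gt hd
  have hxt1 : 0.4923 < xt := by
    rw [hxt, lt_div_iff₀ hd]; nlinarith
  have ht1 : (0.0711:ℝ)^2 < x^2 := by nlinarith
  have ht2 : x^2 < (0.0712:ℝ)^2 := by nlinarith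
  have ht4 : x^4 < ((0.0712:ℝ)^2)^2 := by nlinarith
  have hxt2 : xt < 0.4924 := by
    rw [hxt, div_lt_iff₀ hd]; nlinarith
  have hdt : (2:ℝ) * (1 - xt ^ 2) ^ 2 ≠ 0 := by nlinarith
  have hback : x = (5 * xt ^ 4 - 5 * xt ^ 2 + 1) / (2 * (1 - xt ^ 2) ^ 2) := by
    rw [eq_div_iff hdt, hxt]
    have h1 : (1:ℝ) - x ^ 2 ≠ 0 := by intro h; nlinarith
    field_simp
    linear_combination (-1 : ℝ) * hFx0
  have hxpos : (0:ℝ) < x := by linarith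
  have hxsmall : x < Real.sqrt 3 / 2 := by linarith [sqrt3_half_gt]
  have hxtsmall : xt < Real.sqrt 3 / 2 := by linarith [sqrt3_half_gt]
  have hxtpos : (0:ℝ) < xt := by linarith
  exact ⟨x, xt, ⟨hxpos, hxsmall, hxtpos, hxtsmall, hxt, hback⟩,
    hx1, hx2, hxt1, hxt2, ⟨hxtpos, hxtsmall, hxpos, hxsmall, hback, hxt⟩⟩

/-- The symmetric solution and the two asymmetric solutions of the equilateral
pentagonal Siamese system, with numerical bounds. -/
theorem eq_pent_siamese_solutions :
    (∃ s : ℝ, 0.327 < s ∧ s < 0.328 ∧ EqPentSol (s, s)) ∧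
    (∃ x xt : ℝ, EqPentSol (x, xt) ∧
      0.0711 < x ∧ x < 0.0712 ∧ 0.4923 < xt ∧ xt < 0.4924 ∧
      EqPentSol (xt, x)) := by
  exact ⟨fixed_point, two_cycle⟩
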